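/- Let $p$ be an odd prime, let $a, c$ be positive integers with $c$ a primitive divisor of $p^a - 1$, and let $b = 2^t$ for some integer $t \ge 2$. Then $bc$ is a primitive divisor of $p^{ab} - 1$ if and only if $p^a \equiv 1 \pmod 4$ and $(p^a - 1)/c$ is odd. -/

import Mathlib

lemma aux_v2_pow_sub_one {q : ℕ} (hq : q % 4 = 1) (hq1 : 1 < q) {n : ℕ} (hn : n ≠ 0) :
    padicValNat 2 (q ^ n - 1) = padicValNat 2 (q - 1) + padicValNat 2 n := by
  have hxy : (4 : ℤ) ∣ (q : ℤ) - 1 := by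
    obtain ⟨k, hk⟩ : ∃ k, q = 4 * k + 1 := ⟨q / 4, by omega⟩
    exact ⟨k, by push_cast [hk]; ring⟩
  have hx : ¬ (2 : ℤ) ∣ (q : ℤ) := by
    have h : ¬ (2 : ℕ) ∣ q := by omega
    exact_mod_cast h
  have hmain := Int.two_pow_sub_pow' (x := (q : ℤ)) (y := 1) n hxy hx
  have hqn : 1 ≤ q ^ n := Nat.one_le_pow _ _ (by omega)
  have hqn1 : 1 < q ^ n := Nat.one_lt_pow hn hq1
  have e1 : ((q : ℤ)) ^ n - 1 ^ n = ((q ^ n - 1 : ℕ) : ℤ) := by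
    push_cast [Nat.cast_sub hqn]; ring
  have e2 : ((q : ℤ)) - 1 = ((q - 1 : ℕ) : ℤ) := by
    push_cast [Nat.cast_sub hq1.le]; ring
  rw [e1, e2] at hmain
  have h2 : (2 : ℤ) = ((2 : ℕ) : ℤ) := by norm_num
  rw [h2, Int.natCast_emultiplicity, Int.natCast_emultiplicity,
    Int.natCast_emultiplicity] at hmain
  rw [← Nat.cast_inj (R := ℕ∞), Nat.cast_add,
    padicValNat_eq_emultiplicity (p := 2) (n := q ^ n - 1) (by omega),
    padicValNat_eq_emultiplicity (p := 2) (n := q - 1) (by omega),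
    padicValNat_eq_emultiplicity (p := 2) (n := n) hn]
  exact hmain

lemma aux_two_pow_mul_dvd {t c N : ℕ} (hc : c ≠ 0) (hN : N ≠ 0)
    (h1 : ordCompl[2] c ∣ N) (h2 : t + padicValNat 2 c ≤ padicValNat 2 N) :
    2 ^ t * c ∣ N := by
  have hfac : c.factorization 2 = padicValNat 2 c := Nat.factorization_def c Nat.prime_two
  have hdvd2 : 2 ^ (t + padicValNat 2 c) ∣ N :=
    (padicValNat_dvd_iff_le hN).mpr h2
  have hcop : Nat.Coprime (2 ^ (t + padicValNat 2 c)) (ordCompl[2] c) :=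
    Nat.Coprime.pow_left _
      ((Nat.Prime.coprime_iff_not_dvd Nat.prime_two).mpr (Nat.not_dvd_ordCompl Nat.prime_two hc))
  have key : 2 ^ (t + padicValNat 2 c) * ordCompl[2] c ∣ N :=
    Nat.Coprime.mul_dvd_of_dvd_of_dvd hcop hdvd2 h1
  have heq : 2 ^ t * c = 2 ^ (t + padicValNat 2 c) * ordCompl[2] c := by
    rw [pow_add, mul_assoc, hfac]
    congr 1
    rw [← hfac]
    exact (Nat.ordProj_mul_ordCompl_eq_self c 2).symm
  rwa [heq]

theorem stmt_12 (p a c t : ℕ) (hp : p.Prime) (hodd : Odd p) (ha : 0 < a) (hc : 0 < c)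
    (ht : 2 ≤ t)
    (hcdvd : c ∣ p ^ a - 1) (hcprim : ∀ s, 0 < s → s < a → ¬ c ∣ p ^ s - 1) :
    ((2 ^ t * c ∣ p ^ (a * 2 ^ t) - 1 ∧
        ∀ s, 0 < s → s < a * 2 ^ t → ¬ 2 ^ t * c ∣ p ^ s - 1) ↔
      (p ^ a % 4 = 1 ∧ Odd ((p ^ a - 1) / c))) := by
  have hpodd : p % 2 = 1 := Nat.odd_iff.mp hodd
  have hp3 : 3 ≤ p := by have := hp.two_le; omega
  set q := p ^ a with hqdef
  have hq3 : 3 ≤ q := le_trans hp3 (Nat.le_self_pow ha.ne' p)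
  have hqodd : q % 2 = 1 := Nat.odd_iff.mp hodd.pow
  have hq1 : 1 < q := by omega
  have hcne : c ≠ 0 := hc.ne'
  have hq0 : q - 1 ≠ 0 := by omega
  -- divisibility by c is equivalent to a ∣ s
  have hiff : ∀ n : ℕ, c ∣ p ^ n - 1 ↔ (p : ZMod c) ^ n = 1 := by
    intro n
    have h1 : 1 ≤ p ^ n := Nat.one_le_pow _ _ hp.pos
    rw [← Nat.modEq_iff_dvd' h1]
    constructor
    · intro h
      have h' : ((1 : ℕ) : ZMod c) = ((p ^ n : ℕ) : ZMod c) :=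
        (ZMod.natCast_eq_natCast_iff _ _ _).mpr h
      push_cast at h'
      exact h'.symm
    · intro h
      apply (ZMod.natCast_eq_natCast_iff _ _ _).mp
      push_cast
      exact h.symm
  have hord : orderOf ((p : ZMod c)) = a := by
    have hda : orderOf ((p : ZMod c)) ∣ a := orderOf_dvd_of_pow_eq_one ((hiff a).mp hcdvd)
    have hdpos : 0 < orderOf ((p : ZMod c)) := by
      rcases Nat.eq_zero_or_pos (orderOf ((p : ZMod c))) with h0 | h0
      · rw [h0] at hda; omega
      · exact h0
    have hdle : orderOf ((p : ZMod c)) ≤ a := Nat.le_of_dvd ha hda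
    rcases lt_or_eq_of_le hdle with hlt | heq
    · exact absurd ((hiff _).mpr (pow_orderOf_eq_one _)) (hcprim _ hdpos hlt)
    · exact heq
  have horder : ∀ s : ℕ, c ∣ p ^ s - 1 ↔ a ∣ s := by
    intro s; rw [hiff, ← hord, orderOf_dvd_iff_pow_eq_one]
  set v := padicValNat 2 (q - 1) with hvdef
  set vc := padicValNat 2 c with hvcdef
  have hm : c * ((q - 1) / c) = q - 1 := Nat.mul_div_cancel' hcdvd
  have hm0 : (q - 1) / c ≠ 0 := by
    intro h; rw [h, mul_zero] at hm; omega
  have hsplit : vc + padicValNat 2 ((q - 1) / c) = v := by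
    have h := padicValNat.mul (p := 2) hcne hm0
    rw [hm] at h
    exact h.symm
  have hvcle : vc ≤ v := by omega
  have h2dvd : 2 ∣ (q - 1) / c ↔ 1 ≤ padicValNat 2 ((q - 1) / c) := by
    have h := padicValNat_dvd_iff_le (p := 2) (n := 1) hm0
    simpa using h
  have hodd_iff : Odd ((q - 1) / c) ↔ vc = v := by
    rw [Nat.odd_iff]
    have hmod : (q - 1) / c % 2 = 0 ↔ 2 ∣ (q - 1) / c := (Nat.dvd_iff_mod_eq_zero (m := 2)).symm
    omega
  have hv1 : 1 ≤ v := by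
    have : (2 : ℕ) ^ 1 ∣ q - 1 := by simpa using (by omega : 2 ∣ q - 1)
    exact (padicValNat_dvd_iff_le hq0).mp this
  have hqdvdk : ∀ k : ℕ, q - 1 ∣ q ^ k - 1 := fun k => by
    simpa using Nat.sub_dvd_pow_sub_pow q 1 k
  have hocdvd : ∀ k : ℕ, ordCompl[2] c ∣ q ^ k - 1 := fun k =>
    dvd_trans (dvd_trans (Nat.ordCompl_dvd c 2) hcdvd) (hqdvdk k)
  have hqkne : ∀ k : ℕ, k ≠ 0 → q ^ k - 1 ≠ 0 := fun k hk => by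
    have := Nat.one_lt_pow hk hq1; omega
  have hmod24 : q % 4 % 2 = q % 2 := Nat.mod_mod_of_dvd q (by norm_num)
  -- the divisibility construction used in the forward direction
  have hconstr : q % 4 = 3 ∨ (q % 4 = 1 ∧ vc < v) → 2 ^ t * c ∣ p ^ (a * 2 ^ (t - 1)) - 1 := by
    intro hcase
    rw [pow_mul, ← hqdef]
    have hvcbound : t + vc ≤ padicValNat 2 (q ^ 2 ^ (t - 1) - 1) := by
      rcases hcase with h3 | ⟨h1c, hlt⟩
      · -- q ≡ 3 mod 4 : use base q^2
        have hvc1 : vc ≤ 1 := by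
          have hv1' : v ≤ 1 := by
            by_contra hcon
            have : (2 : ℕ) ^ 2 ∣ q - 1 := (padicValNat_dvd_iff_le hq0).mpr (by omega)
            omega
          omega
        have hq2mod : q ^ 2 % 4 = 1 := by
          rw [Nat.pow_mod, h3]
        have hq21 : 1 < q ^ 2 := Nat.one_lt_pow (by norm_num) hq1
        have h8 : q ^ 2 % 8 = 1 := by
          have hm8 : q % 8 % 2 = q % 2 := Nat.mod_mod_of_dvd q (by norm_num)
          have hr : q % 8 = 1 ∨ q % 8 = 3 ∨ q % 8 = 5 ∨ q % 8 = 7 := by omega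
          rw [Nat.pow_mod]
          rcases hr with h | h | h | h <;> rw [h]
        have h8dvd : (2 : ℕ) ^ 3 ∣ q ^ 2 - 1 := by
          have : (8 : ℕ) ∣ q ^ 2 - 1 := by omega
          simpa using this
        have hv2q2 : 3 ≤ padicValNat 2 (q ^ 2 - 1) :=
          (padicValNat_dvd_iff_le (by omega)).mp h8dvd
        have hrek : q ^ 2 ^ (t - 1) = (q ^ 2) ^ 2 ^ (t - 2) := by
          have hexp : 2 ^ (t - 1) = 2 * 2 ^ (t - 2) := by
            have h' : t - 1 = (t - 2) + 1 := by omega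
            rw [h', pow_succ]; ring
          rw [hexp, pow_mul]
        rw [hrek, aux_v2_pow_sub_one hq2mod hq21 (by positivity), padicValNat.prime_pow]
        omega
      · -- q ≡ 1 mod 4 and vc < v
        rw [aux_v2_pow_sub_one h1c hq1 (by positivity), padicValNat.prime_pow]
        omega
    exact aux_two_pow_mul_dvd hcne (hqkne _ (by positivity)) (hocdvd _) hvcbound
  constructor
  · rintro ⟨-, hprim⟩
    have hs0 : 0 < a * 2 ^ (t - 1) := by positivity
    have hslt : a * 2 ^ (t - 1) < a * 2 ^ t :=
      (Nat.mul_lt_mul_left ha).mpr (Nat.pow_lt_pow_right one_lt_two (by omega))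
    have hnot := hprim _ hs0 hslt
    have h4 : q % 4 = 1 := by
      by_contra h
      have h3 : q % 4 = 3 := by omega
      exact hnot (hconstr (Or.inl h3))
    refine ⟨h4, hodd_iff.mpr ?_⟩
    by_contra hne
    exact hnot (hconstr (Or.inr ⟨h4, by omega⟩))
  · rintro ⟨h4, hmodd⟩
    have hvc : vc = v := hodd_iff.mp hmodd
    constructor
    · rw [pow_mul, ← hqdef]
      apply aux_two_pow_mul_dvd hcne (hqkne _ (by positivity)) (hocdvd _)
      rw [aux_v2_pow_sub_one h4 hq1 (by positivity), padicValNat.prime_pow]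
      omega
    · intro s hs0 hslt hdvd2
      have hcs : c ∣ p ^ s - 1 := dvd_trans (dvd_mul_left c (2 ^ t)) hdvd2
      obtain ⟨k, hk⟩ := (horder s).mp hcs
      have hk0 : k ≠ 0 := by rintro rfl; omega
      have hklt : k < 2 ^ t := by
        by_contra hcon
        have : a * 2 ^ t ≤ a * k := Nat.mul_le_mul_left a (by omega)
        omega
      have h2pow : (2 : ℕ) ^ (t + vc) ∣ p ^ s - 1 := by
        refine dvd_trans ?_ hdvd2
        rw [pow_add]
        exact mul_dvd_mul_left _ (by
          have := Nat.ordProj_dvd c 2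
          rwa [Nat.factorization_def c Nat.prime_two] at this)
      rw [hk, pow_mul, ← hqdef] at h2pow
      have hle := (padicValNat_dvd_iff_le (hqkne k hk0)).mp h2pow
      rw [aux_v2_pow_sub_one h4 hq1 hk0] at hle
      have hval_k : t ≤ padicValNat 2 k := by omega
      have : (2 : ℕ) ^ t ∣ k := (padicValNat_dvd_iff_le hk0).mpr hval_k
      have := Nat.le_of_dvd (Nat.pos_of_ne_zero hk0) this
      omega
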